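/- Fix integers k ≥ 0, j ≥ 0 and 0 ≤ i ≤ k + j. Let A_i be the following set of 2k+4j+3+i distinct lines of the real projective plane: the line z = 0; the lines x = s·z and y = s·z for each integer −j ≤ s ≤ k+j; and the lines x + y = (k−l+1)·z for each integer 1 ≤ l ≤ i. Let H be the line x + y = (k−i)·z (not a member of A_i). Then the set of intersection points {H ∩ K : K ∈ A_i} has exactly k+2j+2+i elements. (Equivalently, the number of triple points satisfies t_{A_i ∪ {H}, H} = k+2j+1, which yields the exact sequence 0 → T_{A_{i+1}} → T_{A_i} → O_H(−k−2j−1) → 0.) -/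

import Mathlib

noncomputable section

/-- The projective line `{a·x + b·y + c·z = 0}` regarded as the 2-dimensional subspace
of `ℝ³` cut out by the linear form with coefficients `a, b, c`. -/
def lineL (a b c : ℝ) : Submodule ℝ (Fin 3 → ℝ) :=
  LinearMap.ker
    ((a • LinearMap.proj 0 + b • LinearMap.proj 1 + c • LinearMap.proj 2 :
      (Fin 3 → ℝ) →ₗ[ℝ] ℝ))

/-- The grid arrangement: the line at infinity `z = 0` together with the lines
`x = s·z` and `y = s·z` for integers `-j ≤ s ≤ k+j`. -/
def gridLines (k j : ℕ) : Set (Submodule ℝ (Fin 3 → ℝ)) :=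
  {lineL 0 0 1} ∪
    {L | ∃ s : ℤ, -(j : ℤ) ≤ s ∧ s ≤ (k : ℤ) + j ∧
      (L = lineL 1 0 (-(s : ℝ)) ∨ L = lineL 0 1 (-(s : ℝ)))}

lemma mem_lineL {a b c : ℝ} {v : Fin 3 → ℝ} :
    v ∈ lineL a b c ↔ a * v 0 + b * v 1 + c * v 2 = 0 := by
  simp [lineL, LinearMap.mem_ker, LinearMap.add_apply, LinearMap.smul_apply,
    LinearMap.proj_apply, smul_eq_mul]

lemma lineL_ne {a b c a' b' c' : ℝ} (v : Fin 3 → ℝ)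
    (h1 : a * v 0 + b * v 1 + c * v 2 = 0)
    (h2 : a' * v 0 + b' * v 1 + c' * v 2 ≠ 0) :
    lineL a b c ≠ lineL a' b' c' := fun h => h2 (mem_lineL.1 (h ▸ mem_lineL.2 h1))

lemma ne10_01 (c c' : ℝ) : lineL 1 0 c ≠ lineL 0 1 c' :=
  lineL_ne ![-c, -c' + 1, 1] (by norm_num [Matrix.cons_val_two]) (by norm_num [Matrix.cons_val_two])

lemma ne10_z (c : ℝ) : lineL 1 0 c ≠ lineL 0 0 1 :=
  lineL_ne ![-c, 0, 1] (by norm_num [Matrix.cons_val_two]) (by norm_num [Matrix.cons_val_two])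

lemma ne01_z (c : ℝ) : lineL 0 1 c ≠ lineL 0 0 1 :=
  lineL_ne ![0, -c, 1] (by norm_num [Matrix.cons_val_two]) (by norm_num [Matrix.cons_val_two])

lemma ne11_z (c : ℝ) : lineL 1 1 c ≠ lineL 0 0 1 :=
  lineL_ne ![-c, 0, 1] (by norm_num [Matrix.cons_val_two]) (by norm_num [Matrix.cons_val_two])

lemma ne11_10 (c c' : ℝ) : lineL 1 1 c ≠ lineL 1 0 c' :=
  lineL_ne ![-c' + 1, c' - 1 - c, 1] (by norm_num [Matrix.cons_val_two]; ring_nf)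
    (by norm_num [Matrix.cons_val_two])

lemma ne11_01 (c c' : ℝ) : lineL 1 1 c ≠ lineL 0 1 c' :=
  lineL_ne ![c' - 1 - c, -c' + 1, 1] (by norm_num [Matrix.cons_val_two]; ring_nf)
    (by norm_num [Matrix.cons_val_two])

lemma inj10 {c c' : ℝ} (h : lineL 1 0 c = lineL 1 0 c') : c = c' := by
  have h1 : (![-c, 0, 1] : Fin 3 → ℝ) ∈ lineL 1 0 c := mem_lineL.2 (by norm_num [Matrix.cons_val_two])
  have h2 := mem_lineL.1 (h ▸ h1)
  norm_num [Matrix.cons_val_two] at h2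
  linarith

lemma inj01 {c c' : ℝ} (h : lineL 0 1 c = lineL 0 1 c') : c = c' := by
  have h1 : (![0, -c, 1] : Fin 3 → ℝ) ∈ lineL 0 1 c := mem_lineL.2 (by norm_num [Matrix.cons_val_two])
  have h2 := mem_lineL.1 (h ▸ h1)
  norm_num [Matrix.cons_val_two] at h2
  linarith

lemma inj11 {c c' : ℝ} (h : lineL 1 1 c = lineL 1 1 c') : c = c' := by
  have h1 : (![-c, 0, 1] : Fin 3 → ℝ) ∈ lineL 1 1 c := mem_lineL.2 (by norm_num [Matrix.cons_val_two])
  have h2 := mem_lineL.1 (h ▸ h1)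
  norm_num [Matrix.cons_val_two] at h2
  linarith

lemma inf_vert (m s : ℝ) :
    lineL 1 1 (-m) ⊓ lineL 1 0 (-s) = Submodule.span ℝ {![s, m - s, 1]} := by
  apply le_antisymm
  · rintro v hv
    obtain ⟨h1, h2⟩ := Submodule.mem_inf.1 hv
    rw [mem_lineL] at h1 h2
    rw [Submodule.mem_span_singleton]
    refine ⟨v 2, ?_⟩
    funext idx
    fin_cases idx
    · show v 2 * s = v 0
      linear_combination -h2
    · show v 2 * (m - s) = v 1
      linear_combination -h1 + h2
    · show v 2 * 1 = v 2
      ring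
  · rw [Submodule.span_le, Set.singleton_subset_iff]
    refine Submodule.mem_inf.2 ⟨mem_lineL.2 ?_, mem_lineL.2 ?_⟩ <;> · norm_num [Matrix.cons_val_two]

lemma inf_horiz (m s : ℝ) :
    lineL 1 1 (-m) ⊓ lineL 0 1 (-s) = Submodule.span ℝ {![m - s, s, 1]} := by
  apply le_antisymm
  · rintro v hv
    obtain ⟨h1, h2⟩ := Submodule.mem_inf.1 hv
    rw [mem_lineL] at h1 h2
    rw [Submodule.mem_span_singleton]
    refine ⟨v 2, ?_⟩
    funext idx
    fin_cases idx
    · show v 2 * (m - s) = v 0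
      linear_combination -h1 + h2
    · show v 2 * s = v 1
      linear_combination -h2
    · show v 2 * 1 = v 2
      ring
  · rw [Submodule.span_le, Set.singleton_subset_iff]
    refine Submodule.mem_inf.2 ⟨mem_lineL.2 ?_, mem_lineL.2 ?_⟩ <;> · norm_num [Matrix.cons_val_two]

lemma inf_zinf (m : ℝ) :
    lineL 1 1 (-m) ⊓ lineL 0 0 1 = Submodule.span ℝ {![(1:ℝ), -1, 0]} := by
  apply le_antisymm
  · rintro v hv
    obtain ⟨h1, h2⟩ := Submodule.mem_inf.1 hv
    rw [mem_lineL] at h1 h2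
    rw [Submodule.mem_span_singleton]
    refine ⟨v 0, ?_⟩
    funext idx
    fin_cases idx
    · show v 0 * 1 = v 0; ring
    · show v 0 * (-1) = v 1
      linear_combination -h1 - m * h2
    · show v 0 * 0 = v 2
      linear_combination -h2
  · rw [Submodule.span_le, Set.singleton_subset_iff]
    refine Submodule.mem_inf.2 ⟨mem_lineL.2 ?_, mem_lineL.2 ?_⟩ <;> · norm_num [Matrix.cons_val_two]

lemma inf_par {m m' : ℝ} (hmm : m ≠ m') :
    lineL 1 1 (-m) ⊓ lineL 1 1 (-m') = Submodule.span ℝ {![(1:ℝ), -1, 0]} := by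
  apply le_antisymm
  · rintro v hv
    obtain ⟨h1, h2⟩ := Submodule.mem_inf.1 hv
    rw [mem_lineL] at h1 h2
    have hz : v 2 = 0 := by
      have h3 : (m' - m) * v 2 = 0 := by linear_combination h1 - h2
      exact (mul_eq_zero.1 h3).resolve_left (sub_ne_zero_of_ne (Ne.symm hmm))
    rw [Submodule.mem_span_singleton]
    refine ⟨v 0, ?_⟩
    funext idx
    fin_cases idx
    · show v 0 * 1 = v 0; ring
    · show v 0 * (-1) = v 1
      linear_combination -h1 - m * hz
    · show v 0 * 0 = v 2
      linear_combination -hz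
  · rw [Submodule.span_le, Set.singleton_subset_iff]
    refine Submodule.mem_inf.2 ⟨mem_lineL.2 ?_, mem_lineL.2 ?_⟩ <;> · norm_num [Matrix.cons_val_two]

lemma spanPt_inj {m t t' : ℝ}
    (h : Submodule.span ℝ {![t, m - t, 1]} = Submodule.span ℝ {![t', m - t', 1]}) :
    t = t' := by
  have h1 : (![t, m - t, 1] : Fin 3 → ℝ) ∈ Submodule.span ℝ {![t', m - t', 1]} :=
    h ▸ Submodule.mem_span_singleton_self _
  obtain ⟨a, ha⟩ := Submodule.mem_span_singleton.1 h1
  have h2 := congrFun ha 2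
  have h0 := congrFun ha 0
  simp at h2 h0
  rw [h2] at h0
  linarith

lemma spanPt_ne_inf {m t : ℝ} :
    Submodule.span ℝ {![t, m - t, 1]} ≠ Submodule.span ℝ {![(1:ℝ), -1, 0]} := by
  intro h
  have h1 : (![t, m - t, 1] : Fin 3 → ℝ) ∈ Submodule.span ℝ {![(1:ℝ), -1, 0]} :=
    h ▸ Submodule.mem_span_singleton_self _
  obtain ⟨a, ha⟩ := Submodule.mem_span_singleton.1 h1
  have h2 := congrFun ha 2
  simp at h2

lemma vec_swap {m : ℝ} (t s : ℝ) (h : t = m - s) :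
    (![t, m - t, 1] : Fin 3 → ℝ) = ![m - s, s, 1] := by
  subst h
  funext x
  fin_cases x <;> simp [sub_sub_cancel]

lemma cardIcc (a b : ℤ) : (Set.Icc a b).ncard = (b + 1 - a).toNat := by
  rw [← Finset.coe_Icc, Set.ncard_coe_finset, Int.card_Icc]

/-- Adding the diagonal line `H : x + y = (k-i)·z` to the arrangement
`A_i = grid ∪ {x+y = (k-l+1)·z, 1 ≤ l ≤ i}` creates `k+2j+2+i` intersection points on
`H`, i.e. `t_{A_i ∪ {H}, H} = k+2j+1`. -/
theorem inner_diagonal_intersections (k j i : ℕ) (hi : i ≤ k + j) :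
    let Ai : Set (Submodule ℝ (Fin 3 → ℝ)) :=
      gridLines k j ∪
        {L | ∃ l : ℤ, 1 ≤ l ∧ l ≤ (i : ℤ) ∧ L = lineL 1 1 (-((k : ℝ) - (l : ℝ) + 1))}
    let H := lineL 1 1 (-((k : ℝ) - (i : ℝ)))
    Ai.ncard = 2 * k + 4 * j + 3 + i ∧
    H ∉ Ai ∧
    ((fun K => H ⊓ K) '' Ai).ncard = k + 2 * j + 2 + i := by
  intro Ai H
  set m : ℝ := (k : ℝ) - (i : ℝ) with hm
  have hH : H = lineL 1 1 (-m) := rfl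
  set V : Set (Submodule ℝ (Fin 3 → ℝ)) :=
    (fun s : ℤ => lineL 1 0 (-(s : ℝ))) '' Set.Icc (-(j : ℤ)) ((k : ℤ) + j) with hV
  set W : Set (Submodule ℝ (Fin 3 → ℝ)) :=
    (fun s : ℤ => lineL 0 1 (-(s : ℝ))) '' Set.Icc (-(j : ℤ)) ((k : ℤ) + j) with hW
  set D : Set (Submodule ℝ (Fin 3 → ℝ)) :=
    (fun l : ℤ => lineL 1 1 (-((k : ℝ) - (l : ℝ) + 1))) '' Set.Icc 1 (i : ℤ) with hD
  have hAi : Ai = insert (lineL 0 0 1) (V ∪ W ∪ D) := by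
    ext L
    simp only [Ai, gridLines, hV, hW, hD, Set.mem_union, Set.mem_insert_iff,
      Set.mem_singleton_iff, Set.mem_setOf_eq, Set.mem_image, Set.mem_Icc]
    constructor
    · rintro ((rfl | ⟨s, h1, h2, (rfl | rfl)⟩) | ⟨l, h1, h2, rfl⟩)
      · exact Or.inl rfl
      · exact Or.inr (Or.inl (Or.inl ⟨s, ⟨h1, h2⟩, rfl⟩))
      · exact Or.inr (Or.inl (Or.inr ⟨s, ⟨h1, h2⟩, rfl⟩))
      · exact Or.inr (Or.inr ⟨l, ⟨h1, h2⟩, rfl⟩)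
    · rintro (rfl | ((⟨s, ⟨h1, h2⟩, rfl⟩ | ⟨s, ⟨h1, h2⟩, rfl⟩) | ⟨l, ⟨h1, h2⟩, rfl⟩))
      · exact Or.inl (Or.inl rfl)
      · exact Or.inl (Or.inr ⟨s, h1, h2, Or.inl rfl⟩)
      · exact Or.inl (Or.inr ⟨s, h1, h2, Or.inr rfl⟩)
      · exact Or.inr ⟨l, h1, h2, rfl⟩
  have hinjV : Function.Injective (fun s : ℤ => lineL 1 0 (-(s : ℝ))) := by
    intro s s' h
    have h2 : -(s : ℝ) = -(s' : ℝ) := inj10 h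
    exact_mod_cast neg_inj.1 h2
  have hinjW : Function.Injective (fun s : ℤ => lineL 0 1 (-(s : ℝ))) := by
    intro s s' h
    have h2 : -(s : ℝ) = -(s' : ℝ) := inj01 h
    exact_mod_cast neg_inj.1 h2
  have hinjD : Function.Injective (fun l : ℤ => lineL 1 1 (-((k : ℝ) - (l : ℝ) + 1))) := by
    intro l l' h
    have h2 := inj11 h
    have h3 : (l : ℝ) = (l' : ℝ) := by linarith
    exact_mod_cast h3
  have hVfin : V.Finite := (Set.finite_Icc _ _).image _
  have hWfin : W.Finite := (Set.finite_Icc _ _).image _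
  have hDfin : D.Finite := (Set.finite_Icc _ _).image _
  have hVW : Disjoint V W := by
    rw [Set.disjoint_left]
    rintro L ⟨s, _, rfl⟩ ⟨s', _, hL⟩
    exact ne10_01 _ _ hL.symm
  have hVD : Disjoint V D := by
    rw [Set.disjoint_left]
    rintro L ⟨s, _, rfl⟩ ⟨l, _, hL⟩
    exact ne11_10 _ _ hL
  have hWD : Disjoint W D := by
    rw [Set.disjoint_left]
    rintro L ⟨s, _, rfl⟩ ⟨l, _, hL⟩
    exact ne11_01 _ _ hL
  have hz : lineL 0 0 1 ∉ V ∪ W ∪ D := by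
    rintro ((⟨s, _, h⟩ | ⟨s, _, h⟩) | ⟨l, _, h⟩)
    exacts [ne10_z _ h, ne01_z _ h, ne11_z _ h]
  have hVcard : V.ncard = k + 2 * j + 1 := by
    rw [hV, Set.ncard_image_of_injective _ hinjV, cardIcc]; omega
  have hWcard : W.ncard = k + 2 * j + 1 := by
    rw [hW, Set.ncard_image_of_injective _ hinjW, cardIcc]; omega
  have hDcard : D.ncard = i := by
    rw [hD, Set.ncard_image_of_injective _ hinjD, cardIcc]; omega
  refine ⟨?_, ?_, ?_⟩
  · rw [hAi, Set.ncard_insert_of_notMem hz ((hVfin.union hWfin).union hDfin),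
      Set.ncard_union_eq (Set.disjoint_union_left.2 ⟨hVD, hWD⟩) (hVfin.union hWfin) hDfin,
      Set.ncard_union_eq hVW hVfin hWfin, hVcard, hWcard, hDcard]
    omega
  · rw [hAi, hH]
    rintro (h | ((⟨s, _, h⟩ | ⟨s, _, h⟩) | ⟨l, hl, h⟩))
    · exact ne11_z _ h
    · exact ne11_10 _ _ h.symm
    · exact ne11_01 _ _ h.symm
    · have h2 := inj11 h
      rw [hm] at h2
      have h3 : (l : ℝ) = (i : ℝ) + 1 := by linarith
      have h4 : (l : ℤ) = (i : ℤ) + 1 := by exact_mod_cast h3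
      rw [Set.mem_Icc] at hl
      omega
  · have hIm : (fun K => H ⊓ K) '' Ai =
        insert (Submodule.span ℝ {![(1:ℝ), -1, 0]})
          ((fun t : ℤ => Submodule.span ℝ {![(t : ℝ), m - t, 1]}) ''
            Set.Icc (-(i : ℤ) - j) ((k : ℤ) + j)) := by
      rw [hAi, hH]
      ext P
      simp only [Set.mem_image, Set.mem_insert_iff, Set.mem_union, Set.mem_Icc, hV, hW, hD,
        Set.mem_singleton_iff]
      constructor
      · rintro ⟨K, (rfl | ((⟨s, hs, rfl⟩ | ⟨s, hs, rfl⟩) | ⟨l, hl, rfl⟩)), rfl⟩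
        · exact Or.inl (inf_zinf m)
        · exact Or.inr ⟨s, ⟨by omega, hs.2⟩, (inf_vert m s).symm⟩
        · refine Or.inr ⟨(k : ℤ) - i - s, ⟨by omega, by omega⟩, ?_⟩
          have hts : ((((k : ℤ) - i - s : ℤ)) : ℝ) = m - (s : ℝ) := by
            rw [hm]; push_cast; ring
          rw [inf_horiz, vec_swap _ _ hts]
        · refine Or.inl (inf_par ?_)
          intro h
          rw [hm] at h
          have h3 : (l : ℝ) = (i : ℝ) + 1 := by linarith
          have h4 : (l : ℤ) = (i : ℤ) + 1 := by exact_mod_cast h3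
          omega
      · rintro (rfl | ⟨t, ht, rfl⟩)
        · exact ⟨lineL 0 0 1, Or.inl rfl, inf_zinf m⟩
        · by_cases hc : -(j : ℤ) ≤ t
          · exact ⟨lineL 1 0 (-(t : ℝ)),
              Or.inr (Or.inl (Or.inl ⟨t, ⟨hc, ht.2⟩, rfl⟩)), inf_vert m t⟩
          · refine ⟨lineL 0 1 (-((((k : ℤ) - i - t : ℤ)) : ℝ)),
              Or.inr (Or.inl (Or.inr ⟨(k : ℤ) - i - t, ⟨by omega, by omega⟩, rfl⟩)), ?_⟩
            have hts : ((t : ℤ) : ℝ) = m - ((((k : ℤ) - i - t : ℤ)) : ℝ) := by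
              rw [hm]; push_cast; ring
            show lineL 1 1 (-m) ⊓ lineL 0 1 (-((((k : ℤ) - i - t : ℤ)) : ℝ)) = _
            rw [inf_horiz, vec_swap _ _ hts]
    rw [hIm]
    have hinjPt : Function.Injective
        (fun t : ℤ => Submodule.span ℝ {![(t : ℝ), m - t, 1]}) := by
      intro t t' h
      have := spanPt_inj h
      exact_mod_cast this
    have hnot : Submodule.span ℝ {![(1:ℝ), -1, 0]} ∉
        ((fun t : ℤ => Submodule.span ℝ {![(t : ℝ), m - t, 1]}) ''
          Set.Icc (-(i : ℤ) - j) ((k : ℤ) + j)) := by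
      rintro ⟨t, _, h⟩
      exact spanPt_ne_inf h
    rw [Set.ncard_insert_of_notMem hnot ((Set.finite_Icc _ _).image _),
      Set.ncard_image_of_injective _ hinjPt, cardIcc]
    omega
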